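/- Let E be a nonempty finite set and let p be a probability mass function on {0,1}^E with p(x) > 0 for all x. For e ∈ E and x ∈ {0,1}^E let π_e(x) = p(x^{e,1})/(p(x^{e,1}) + p(x^{e,0})) be the conditional probability of edge e given the remaining coordinates. Let f : {0,1}^E → ℝ be nondecreasing with respect to the coordinatewise partial order (x ≤ y iff x_e ≤ y_e for all e). (i) If a ∈ [0,1] and π_e(x) ≥ a for all e and x, then the expectation of f under the product Bernoulli(a) measure on {0,1}^E is at most the expectation of f under p. (ii) If b ∈ [0,1] and π_e(x) ≤ b for all e and x, then the expectation of f under p is at most the expectation of f under the product Bernoulli(b) measure on {0,1}^E. -/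

import Mathlib

open scoped BigOperators

open Finset Function

section Aux

variable {E : Type*} [Fintype E] [DecidableEq E]

private def agr (x : E → Bool) (S : Finset E) : Finset (E → Bool) :=
  Finset.univ.filter fun y => ∀ e ∉ S, y e = x e

private lemma mem_agr {x y : E → Bool} {S : Finset E} :
    y ∈ agr x S ↔ ∀ e ∉ S, y e = x e := by
  simp [agr]

private def AA (p : (E → Bool) → ℝ) (a : ℝ) (S : Finset E) (x : E → Bool) : ℝ :=
  (∑ y ∈ agr x S, p y) * ∏ e ∈ S, (if x e then a else 1 - a)

private lemma agr_empty (x : E → Bool) : agr x ∅ = {x} := by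
  ext y
  simp only [mem_agr, Finset.mem_singleton, Finset.notMem_empty]
  constructor
  · intro h; funext e; exact h e (by simp)
  · intro h e _; rw [h]

private lemma agr_insert {x : E → Bool} {S : Finset E} {e : E} (he : e ∉ S) :
    agr x (insert e S) = agr (update x e true) S ∪ agr (update x e false) S := by
  ext y
  simp only [mem_agr, Finset.mem_union, Finset.mem_insert]
  constructor
  · intro h
    cases hy : y e
    · right
      intro e' he'
      by_cases hee : e' = e
      · subst hee; simp [hy]
      · rw [Function.update_of_ne hee]
        exact h e' (by tauto)
    · left
      intro e' he'
      by_cases hee : e' = e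
      · subst hee; simp [hy]
      · rw [Function.update_of_ne hee]
        exact h e' (by tauto)
  · rintro (h | h) e' he'
    · have hee : e' ≠ e := fun hc => he' (Or.inl hc)
      have := h e' (fun hc => he' (Or.inr hc))
      rwa [Function.update_of_ne hee] at this
    · have hee : e' ≠ e := fun hc => he' (Or.inl hc)
      have := h e' (fun hc => he' (Or.inr hc))
      rwa [Function.update_of_ne hee] at this

private lemma agr_disj {x : E → Bool} {S : Finset E} {e : E} (he : e ∉ S) :
    Disjoint (agr (update x e true) S) (agr (update x e false) S) := by
  rw [Finset.disjoint_left]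
  intro y h1 h0
  have H1 := (mem_agr.1 h1) e he
  have H0 := (mem_agr.1 h0) e he
  simp [Function.update_self] at H1 H0
  rw [H1] at H0
  exact Bool.noConfusion H0

private lemma prod_update_eq {x : E → Bool} {S : Finset E} {e : E} (he : e ∉ S)
    (a : ℝ) (c : Bool) :
    (∏ e' ∈ S, (if update x e c e' then a else 1 - a))
      = ∏ e' ∈ S, (if x e' then a else 1 - a) := by
  refine Finset.prod_congr rfl fun e' he' => ?_
  rw [Function.update_of_ne (by rintro rfl; exact he he')]

private lemma AA_insert (p : (E → Bool) → ℝ) (a : ℝ) {S : Finset E} {e : E}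
    (he : e ∉ S) (x : E → Bool) :
    AA p a (insert e S) x
      = (if x e then a else 1 - a)
          * (AA p a S (update x e true) + AA p a S (update x e false)) := by
  unfold AA
  rw [agr_insert he, Finset.sum_union (agr_disj he), Finset.prod_insert he,
    prod_update_eq he, prod_update_eq he]
  ring

private lemma AA_nonneg {p : (E → Bool) → ℝ} (hp : ∀ x, 0 ≤ p x) {a : ℝ}
    (ha0 : 0 ≤ a) (ha1 : a ≤ 1) (S : Finset E) (x : E → Bool) :
    0 ≤ AA p a S x := by
  apply mul_nonneg
  · exact Finset.sum_nonneg fun y _ => hp y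
  · apply Finset.prod_nonneg
    intro e _
    split <;> linarith

private lemma AA_cond {p : (E → Bool) → ℝ} (hp : ∀ x, 0 ≤ p x) {a : ℝ}
    (ha0 : 0 ≤ a) (ha1 : a ≤ 1)
    (hC : ∀ (e : E) (x : E → Bool),
      a * p (update x e false) ≤ (1 - a) * p (update x e true))
    {S : Finset E} {e : E} (he : e ∉ S) (x : E → Bool) :
    a * AA p a S (update x e false) ≤ (1 - a) * AA p a S (update x e true) := by
  unfold AA
  rw [prod_update_eq he, prod_update_eq he]
  set P : ℝ := ∏ e' ∈ S, (if x e' then a else 1 - a) with hP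
  have hPnn : 0 ≤ P := Finset.prod_nonneg fun e' _ => by split <;> linarith
  have key : a * (∑ y ∈ agr (update x e false) S, p y)
      ≤ (1 - a) * (∑ y ∈ agr (update x e true) S, p y) := by
    rw [Finset.mul_sum, Finset.mul_sum]
    have reidx : (∑ y ∈ agr (update x e true) S, (1 - a) * p y)
        = ∑ y ∈ agr (update x e false) S, (1 - a) * p (update y e true) := by
      refine Finset.sum_nbij' (fun y => update y e false) (fun y => update y e true)
        ?_ ?_ ?_ ?_ ?_
      · intro y hy
        rw [mem_agr] at hy ⊢
        intro e' he'
        by_cases hee : e' = e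
        · subst hee; simp
        · rw [Function.update_of_ne hee, Function.update_of_ne hee]
          have := hy e' he'
          rwa [Function.update_of_ne hee] at this
      · intro y hy
        rw [mem_agr] at hy ⊢
        intro e' he'
        by_cases hee : e' = e
        · subst hee; simp
        · rw [Function.update_of_ne hee, Function.update_of_ne hee]
          have := hy e' he'
          rwa [Function.update_of_ne hee] at this
      · intro y hy
        have hye : y e = true := by
          have := (mem_agr.1 hy) e he; simpa using this
        rw [Function.update_idem, ← hye, Function.update_eq_self]
      · intro y hy
        have hye : y e = false := by
          have := (mem_agr.1 hy) e he; simpa using this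
        rw [Function.update_idem, ← hye, Function.update_eq_self]
      · intro y hy
        have hye : y e = true := by
          have := (mem_agr.1 hy) e he; simpa using this
        rw [Function.update_idem, ← hye, Function.update_eq_self]
    rw [reidx]
    refine Finset.sum_le_sum fun y hy => ?_
    have hye : y e = false := by
      have := (mem_agr.1 hy) e he; simpa using this
    have := hC e y
    rwa [show update y e false = y by rw [← hye, Function.update_eq_self]] at this
  calc a * ((∑ y ∈ agr (update x e false) S, p y) * P)
      = (a * ∑ y ∈ agr (update x e false) S, p y) * P := by ring
    _ ≤ ((1 - a) * ∑ y ∈ agr (update x e true) S, p y) * P :=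
        mul_le_mul_of_nonneg_right key hPnn
    _ = (1 - a) * ((∑ y ∈ agr (update x e true) S, p y) * P) := by ring

private lemma sum_split (g : (E → Bool) → ℝ) (e : E) :
    ∑ x : E → Bool, g x
      = ∑ x ∈ Finset.univ.filter (fun x : E → Bool => x e = false),
          (g (update x e true) + g x) := by
  rw [Finset.sum_add_distrib]
  have h1 : (∑ x ∈ Finset.univ.filter (fun x : E → Bool => x e = false),
      g (update x e true))
      = ∑ x ∈ Finset.univ.filter (fun x : E → Bool => ¬ x e = false), g x := by
    refine Finset.sum_nbij' (fun y => update y e true) (fun y => update y e false)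
      ?_ ?_ ?_ ?_ ?_
    · intro y hy; simp
    · intro y hy; simp
    · intro y hy
      have hye : y e = false := (Finset.mem_filter.1 hy).2
      rw [Function.update_idem, ← hye, Function.update_eq_self]
    · intro y hy
      have hye : y e = true := by
        have := (Finset.mem_filter.1 hy).2; simpa using this
      rw [Function.update_idem, ← hye, Function.update_eq_self]
    · intro y hy; rfl
  rw [h1, add_comm]
  exact (Finset.sum_filter_add_sum_filter_not _ _ _).symm

private lemma le_update_true (x : E → Bool) (e : E) : x ≤ update x e true := by
  intro e'
  by_cases hee : e' = e
  · subst hee; simp [Function.update_self]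
  · rw [Function.update_of_ne hee]

private lemma main_lemma (p : (E → Bool) → ℝ) (hp : ∀ x, 0 ≤ p x) (a : ℝ)
    (ha0 : 0 ≤ a) (ha1 : a ≤ 1)
    (hC : ∀ (e : E) (x : E → Bool),
      a * p (update x e false) ≤ (1 - a) * p (update x e true))
    (f : (E → Bool) → ℝ) (hf : Monotone f) (S : Finset E) :
    ∑ x : E → Bool, AA p a S x * f x ≤ ∑ x : E → Bool, p x * f x := by
  induction S using Finset.induction with
  | empty =>
      refine le_of_eq (Finset.sum_congr rfl fun x _ => ?_)
      unfold AA
      rw [agr_empty, Finset.sum_singleton, Finset.prod_empty, mul_one]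
  | @insert e S he ih =>
      refine le_trans ?_ ih
      rw [sum_split (fun x => AA p a (insert e S) x * f x) e,
        sum_split (fun x => AA p a S x * f x) e]
      refine Finset.sum_le_sum fun x hx => ?_
      have hxe : x e = false := (Finset.mem_filter.1 hx).2
      have hx0 : update x e false = x := by rw [← hxe, Function.update_eq_self]
      set x1 := update x e true with hx1
      have hA1 : AA p a (insert e S) x1 = a * (AA p a S x1 + AA p a S x) := by
        rw [AA_insert p a he x1]
        have h1 : x1 e = true := by simp [hx1]
        have h2 : update x1 e true = x1 := by rw [hx1, Function.update_idem]
        have h3 : update x1 e false = x := by rw [hx1, Function.update_idem, hx0]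
        rw [h1, h2, h3]
        simp
      have hA0 : AA p a (insert e S) x = (1 - a) * (AA p a S x1 + AA p a S x) := by
        rw [AA_insert p a he x]
        rw [hxe, hx0]
        simp
        exact Or.inl rfl
      have hcond : a * AA p a S x ≤ (1 - a) * AA p a S x1 := by
        have := AA_cond hp ha0 ha1 hC he x
        rwa [hx0] at this
      have hfle : f x ≤ f x1 := hf (le_update_true x e)
      have hAnn0 : 0 ≤ AA p a S x := AA_nonneg hp ha0 ha1 S x
      have hAnn1 : 0 ≤ AA p a S x1 := AA_nonneg hp ha0 ha1 S x1
      simp only [hA1, hA0]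
      nlinarith [mul_nonneg (sub_nonneg.2 hcond) (sub_nonneg.2 hfle)]

private lemma AA_univ (p : (E → Bool) → ℝ) (a : ℝ) (x : E → Bool) :
    AA p a Finset.univ x
      = (∑ y : E → Bool, p y) * ∏ e : E, (if x e then a else 1 - a) := by
  unfold AA
  congr 1
  refine Finset.sum_congr ?_ fun _ _ => rfl
  ext y; simp [mem_agr]

end Aux

/-- Stochastic domination part of Lemma D.5 of the paper (after Butts 2010):
for a full-support pmf `p` on `{0,1}^E` and a nondecreasing statistic `f`,
(i) if all conditional edge probabilities are `≥ a`, the expectation of `f` under the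
product Bernoulli(`a`) measure is at most the expectation under `p`; (ii) if they are
`≤ b`, the expectation under `p` is at most that under product Bernoulli(`b`). -/
theorem statement10 {E : Type*} [Fintype E] [DecidableEq E] [Nonempty E]
    (p : (E → Bool) → ℝ) (hpos : ∀ x, 0 < p x) (hsum : ∑ x : E → Bool, p x = 1)
    (π : E → (E → Bool) → ℝ)
    (hπ : ∀ e x, π e x =
      p (Function.update x e true) /
        (p (Function.update x e true) + p (Function.update x e false)))
    (f : (E → Bool) → ℝ) (hf : Monotone f) :
    (∀ a : ℝ, 0 ≤ a → a ≤ 1 → (∀ e x, a ≤ π e x) →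
      (∑ x : E → Bool, (∏ e : E, (if x e then a else 1 - a)) * f x) ≤
        ∑ x : E → Bool, p x * f x) ∧
    (∀ b : ℝ, 0 ≤ b → b ≤ 1 → (∀ e x, π e x ≤ b) →
      (∑ x : E → Bool, p x * f x) ≤
        ∑ x : E → Bool, (∏ e : E, (if x e then b else 1 - b)) * f x) := by
  have hp : ∀ x, 0 ≤ p x := fun x => (hpos x).le
  have hratio : ∀ (e : E) (x : E → Bool) (b : ℝ),
      π e x ≤ b → (1 - b) * p (Function.update x e true)
        ≤ b * p (Function.update x e false) := by
    intro e x b h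
    have h1 := hpos (Function.update x e true)
    have h0 := hpos (Function.update x e false)
    rw [hπ] at h
    have hden : 0 < p (Function.update x e true) + p (Function.update x e false) :=
      by linarith
    rw [div_le_iff₀ hden] at h
    nlinarith
  have hratio' : ∀ (e : E) (x : E → Bool) (a : ℝ),
      a ≤ π e x → a * p (Function.update x e false)
        ≤ (1 - a) * p (Function.update x e true) := by
    intro e x a h
    have h1 := hpos (Function.update x e true)
    have h0 := hpos (Function.update x e false)
    rw [hπ] at h
    have hden : 0 < p (Function.update x e true) + p (Function.update x e false) :=
      by linarith
    rw [le_div_iff₀ hden] at h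
    nlinarith
  constructor
  · intro a ha0 ha1 hge
    have H := main_lemma p hp a ha0 ha1 (fun e x => hratio' e x a (hge e x)) f hf
      Finset.univ
    calc (∑ x : E → Bool, (∏ e : E, (if x e then a else 1 - a)) * f x)
        = ∑ x : E → Bool, AA p a Finset.univ x * f x := by
          refine Finset.sum_congr rfl fun x _ => ?_
          rw [AA_univ, hsum, one_mul]
      _ ≤ ∑ x : E → Bool, p x * f x := H
  · intro b hb0 hb1 hle
    set n : (E → Bool) → (E → Bool) := fun x e => !x e with hn
    have hinv : Function.Involutive n := by
      intro x; funext e; simp [hn]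
    have hkey : ∀ (x : E → Bool) (e : E) (c : Bool),
        n (Function.update x e c) = Function.update (n x) e (!c) := by
      intro x e c; funext e'
      by_cases hee : e' = e
      · subst hee; simp [hn]
      · simp [hn, Function.update_of_ne hee]
    set q : (E → Bool) → ℝ := fun x => p (n x) with hq
    have hqn : ∀ x, 0 ≤ q x := fun x => hp (n x)
    set g : (E → Bool) → ℝ := fun x => -f (n x) with hg
    have hgm : Monotone g := by
      intro x y hxy
      simp only [hg, neg_le_neg_iff]
      apply hf
      intro e
      have := hxy e
      simp only [hn]
      cases hx : x e <;> cases hy2 : y e <;> simp_all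
    have hCq : ∀ (e : E) (x : E → Bool),
        (1 - b) * q (Function.update x e false)
          ≤ (1 - (1 - b)) * q (Function.update x e true) := by
      intro e x
      have h1 : q (Function.update x e false) = p (Function.update (n x) e true) := by
        rw [hq]; simp only []; rw [hkey]; norm_num
      have h2 : q (Function.update x e true) = p (Function.update (n x) e false) := by
        rw [hq]; simp only []; rw [hkey]; norm_num
      rw [h1, h2]
      have := hratio e (n x) b (hle e (n x))
      linarith
    have H := main_lemma q hqn (1 - b) (by linarith) (by linarith) hCq g hgm
      Finset.univ
    have hqsum : ∑ y : E → Bool, q y = 1 := by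
      rw [← hsum]
      exact Fintype.sum_bijective n hinv.bijective _ _ (fun x => rfl)
    have e1 : ∑ x : E → Bool, AA q (1 - b) Finset.univ x * g x
        = -(∑ x : E → Bool, (∏ e : E, (if x e then b else 1 - b)) * f x) := by
      rw [← Finset.sum_neg_distrib]
      refine Fintype.sum_bijective n hinv.bijective _ _ fun x => ?_
      show AA q (1 - b) Finset.univ x * g x
        = -((∏ e : E, (if n x e then b else 1 - b)) * f (n x))
      rw [AA_univ, hqsum, one_mul]
      have hprodeq : (∏ e : E, (if x e then 1 - b else 1 - (1 - b)))
          = ∏ e : E, (if n x e then b else 1 - b) := by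
        refine Finset.prod_congr rfl fun e _ => ?_
        simp only [hn]
        cases x e <;> norm_num
      rw [hprodeq, hg]
      ring
    have e2 : ∑ x : E → Bool, q x * g x = -(∑ x : E → Bool, p x * f x) := by
      rw [← Finset.sum_neg_distrib]
      refine Fintype.sum_bijective n hinv.bijective _ _ fun x => ?_
      show q x * g x = -(p (n x) * f (n x))
      rw [hq, hg]
      ring
    rw [e1, e2] at H
    linarith
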